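/- Let 𝒦 = {K₁, …, K_M} be a finite set of row-stochastic N×N real matrices, each with strictly positive diagonal entries, let p₁, …, p_M be strictly positive reals summing to 1, and suppose Σᵢ pᵢKᵢ is primitive. Define E[Ψ₂(t)] = Σ_{(k₁,…,k_t) ∈ {1,…,M}^t} p_{k₁}⋯p_{k_t} · ‖(I−J)K_{k₁}⋯K_{k_t}‖_F² and R = ((I−J) ⊗ (I−J)) · Σᵢ pᵢ (Kᵢ ⊗ Kᵢ). Then ρ(R) < 1 (equivalently, κ := −log ρ(R) > 0), and for every η with ρ(R) < η < 1 there exists a constant C > 0 such that E[Ψ₂(t)] ≤ C·η^t for all t ≥ 1; in particular E[Ψ₂(t)] → 0 exponentially fast. -/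

import Mathlib

open Matrix Kronecker Finset

/-- A square real matrix is row-stochastic if it has nonnegative entries and
each of its rows sums to 1. -/
def RowStochastic {N : ℕ} (K : Matrix (Fin N) (Fin N) ℝ) : Prop :=
  (∀ i j, 0 ≤ K i j) ∧ ∀ i, ∑ j, K i j = 1

/-- A nonnegative square matrix `T` is primitive if `T ^ m` has all entries
strictly positive for some integer `m ≥ 1`. -/
def IsPrimitive {n : Type*} [Fintype n] [DecidableEq n] (T : Matrix n n ℝ) : Prop :=
  ∃ m : ℕ, 1 ≤ m ∧ ∀ i j, 0 < (T ^ m) i j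

/-- `J = (1/N) 𝟙 𝟙ᵀ`, the `N × N` averaging matrix. -/
noncomputable def Jmat (N : ℕ) : Matrix (Fin N) (Fin N) ℝ :=
  Matrix.of fun _ _ => (N : ℝ)⁻¹

/-- The spectral radius of a real square matrix: the maximum modulus of its
complex eigenvalues. -/
noncomputable def specRad {n : Type*} [Fintype n] [DecidableEq n]
    (A : Matrix n n ℝ) : ℝ :=
  (spectralRadius ℂ (A.map Complex.ofReal)).toReal

/-! ### Auxiliary machinery -/

set_option linter.unusedSectionVars false
set_option maxHeartbeats 1000000

open scoped ENNReal NNReal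

namespace Stmt11Aux

section General

variable {n : Type*} [Fintype n] [DecidableEq n]

/-- nonneg entries, row sums 1 -/
def Stoch (A : Matrix n n ℝ) : Prop :=
  (∀ i j, 0 ≤ A i j) ∧ ∀ i, ∑ j, A i j = 1

lemma Stoch.one : Stoch (1 : Matrix n n ℝ) := by
  constructor
  · intro i j
    by_cases h : i = j <;> simp [Matrix.one_apply, h]
  · intro i; simp [Matrix.one_apply]

lemma Stoch.mul {A B : Matrix n n ℝ} (hA : Stoch A) (hB : Stoch B) : Stoch (A * B) := by
  constructor
  · intro i j
    rw [Matrix.mul_apply]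
    exact Finset.sum_nonneg fun l _ => mul_nonneg (hA.1 i l) (hB.1 l j)
  · intro i
    simp_rw [Matrix.mul_apply]
    rw [Finset.sum_comm]
    simp_rw [← Finset.mul_sum, hB.2, mul_one]
    exact hA.2 i

lemma Stoch.pow {A : Matrix n n ℝ} (hA : Stoch A) (t : ℕ) : Stoch (A ^ t) := by
  induction t with
  | zero => simpa using Stoch.one
  | succ t ih => rw [pow_succ]; exact ih.mul hA

lemma Stoch.listProd : ∀ L : List (Matrix n n ℝ), (∀ A ∈ L, Stoch A) → Stoch L.prod
  | [], _ => by simpa using Stoch.one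
  | (A :: L), h => by
      rw [List.prod_cons]
      exact (h A (by simp)).mul (Stoch.listProd L fun B hB => h B (by simp [hB]))

/-- nonneg entries and positive diagonal -/
def PosDiag (A : Matrix n n ℝ) : Prop :=
  (∀ i j, 0 ≤ A i j) ∧ ∀ i, 0 < A i i

lemma PosDiag.one : PosDiag (1 : Matrix n n ℝ) := by
  refine ⟨fun i j => ?_, fun i => by simp⟩
  by_cases h : i = j <;> simp [Matrix.one_apply, h]

lemma PosDiag.mul {A B : Matrix n n ℝ} (hA : PosDiag A) (hB : PosDiag B) : PosDiag (A * B) := by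
  constructor
  · intro i j
    rw [Matrix.mul_apply]
    exact Finset.sum_nonneg fun l _ => mul_nonneg (hA.1 i l) (hB.1 l j)
  · intro i
    rw [Matrix.mul_apply]
    have : 0 < A i i * B i i := mul_pos (hA.2 i) (hB.2 i)
    refine lt_of_lt_of_le this ?_
    exact Finset.single_le_sum (f := fun l => A i l * B l i)
      (fun l _ => mul_nonneg (hA.1 i l) (hB.1 l i)) (Finset.mem_univ i)

lemma PosDiag.listProd : ∀ L : List (Matrix n n ℝ), (∀ A ∈ L, PosDiag A) → PosDiag L.prod
  | [], _ => by simpa using PosDiag.one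
  | (A :: L), h => by
      rw [List.prod_cons]
      exact (h A (by simp)).mul (PosDiag.listProd L fun B hB => h B (by simp [hB]))

/-- expansion of a power of a sum as a sum over words -/
lemma pow_sum_expand {ι : Type*} [Fintype ι] (B : ι → Matrix n n ℝ) :
    ∀ t : ℕ, (∑ k, B k) ^ t = ∑ f : Fin t → ι, (List.ofFn fun s => B (f s)).prod
  | 0 => by simp
  | (t + 1) => by
      rw [pow_succ', pow_sum_expand B t, Finset.sum_mul_sum]
      rw [← (Fin.consEquiv fun _ => ι).sum_comp
        (fun f : Fin (t+1) → ι => (List.ofFn fun s => B (f s)).prod)]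
      rw [Fintype.sum_prod_type]
      refine Finset.sum_congr rfl fun k _ => Finset.sum_congr rfl fun f _ => ?_
      rw [List.ofFn_succ, List.prod_cons]
      simp [Fin.consEquiv, Fin.cons_zero, Fin.cons_succ]

lemma listProd_smul : ∀ (t : ℕ) (c : Fin t → ℝ) (A : Fin t → Matrix n n ℝ),
    (List.ofFn fun s => c s • A s).prod = (∏ s, c s) • (List.ofFn A).prod
  | 0, _, _ => by simp
  | (t + 1), c, A => by
      rw [List.ofFn_succ, List.prod_cons, List.ofFn_succ (f := A), List.prod_cons,
        listProd_smul t (fun s => c (s.succ)) (fun s => A (s.succ)),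
        Fin.prod_univ_succ]
      rw [smul_mul_assoc, mul_smul_comm, smul_smul]

/-- ℓ¹ contraction without zero-sum -/
lemma l1_mul_le {A : Matrix n n ℝ} (hA : Stoch A) (y : n → ℝ) :
    ∑ j, |∑ i, y i * A i j| ≤ ∑ i, |y i| := by
  calc ∑ j, |∑ i, y i * A i j| ≤ ∑ j, ∑ i, |y i| * A i j := by
        refine Finset.sum_le_sum fun j _ => ?_
        refine (Finset.abs_sum_le_sum_abs _ _).trans ?_
        refine Finset.sum_le_sum fun i _ => ?_
        rw [abs_mul]
        exact mul_le_mul_of_nonneg_left (le_of_eq (abs_of_nonneg (hA.1 i j))) (abs_nonneg _)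
    _ = ∑ i, |y i| * ∑ j, A i j := by rw [Finset.sum_comm]; simp [Finset.mul_sum]
    _ = ∑ i, |y i| := by simp [hA.2]

/-- Dobrushin contraction for zero-sum row vectors -/
lemma l1_contraction {A : Matrix n n ℝ} (hA : Stoch A) {ε : ℝ} (hε : 0 ≤ ε)
    (hεA : ∀ i j, ε ≤ A i j) {y : n → ℝ} (hy : ∑ i, y i = 0) :
    ∑ j, |∑ i, y i * A i j| ≤ (1 - (Fintype.card n : ℝ) * ε) * ∑ i, |y i| := by
  have key : ∀ j, ∑ i, y i * A i j = ∑ i, y i * (A i j - ε) := by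
    intro j
    simp_rw [mul_sub]
    rw [Finset.sum_sub_distrib, ← Finset.sum_mul, hy, zero_mul, sub_zero]
  calc ∑ j, |∑ i, y i * A i j| ≤ ∑ j, ∑ i, |y i| * (A i j - ε) := by
        refine Finset.sum_le_sum fun j _ => ?_
        rw [key j]
        refine (Finset.abs_sum_le_sum_abs _ _).trans ?_
        refine Finset.sum_le_sum fun i _ => ?_
        rw [abs_mul]
        exact mul_le_mul_of_nonneg_left
          (le_of_eq (abs_of_nonneg (by linarith [hεA i j]))) (abs_nonneg _)
    _ = ∑ i, |y i| * ∑ j, (A i j - ε) := by rw [Finset.sum_comm]; simp_rw [← Finset.mul_sum]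
    _ = ∑ i, |y i| * (1 - (Fintype.card n : ℝ) * ε) := by
        refine Finset.sum_congr rfl fun i _ => ?_
        rw [Finset.sum_sub_distrib, hA.2 i, Finset.sum_const, Finset.card_univ, nsmul_eq_mul]
    _ = (1 - (Fintype.card n : ℝ) * ε) * ∑ i, |y i| := by
        rw [← Finset.sum_mul, mul_comm]

/-- Main decay estimate for rows of `W * S^t`. -/
lemma decay {W S : Matrix n n ℝ} (hS : Stoch S) {m : ℕ} (hm : 1 ≤ m)
    {ε : ℝ} (hε : 0 ≤ ε) (hεS : ∀ i j, ε ≤ (S ^ m) i j)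
    (hW0 : ∀ a, ∑ b, W a b = 0)
    {B : ℝ} (hB : ∀ a, ∑ b, |W a b| ≤ B)
    (hθ : 0 ≤ 1 - (Fintype.card n : ℝ) * ε) :
    ∀ t a, ∑ b, |(W * S ^ t) a b| ≤ B * (1 - (Fintype.card n : ℝ) * ε) ^ (t / m) := by
  intro t
  induction t using Nat.strong_induction_on with
  | _ t ih =>
    intro a
    set θ : ℝ := 1 - (Fintype.card n : ℝ) * ε with hθdef
    have hSpow : ∀ u, Stoch (S ^ u) := fun u => hS.pow u
    rcases lt_or_ge t m with htm | htm
    · -- t < m : t / m = 0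
      rw [Nat.div_eq_of_lt htm, pow_zero, mul_one]
      have : ∀ b, (W * S ^ t) a b = ∑ i, W a i * (S ^ t) i b := by
        intro b; rw [Matrix.mul_apply]
      calc ∑ b, |(W * S ^ t) a b| = ∑ b, |∑ i, W a i * (S ^ t) i b| := by
            simp_rw [this]
        _ ≤ ∑ i, |W a i| := l1_mul_le (hSpow t) _
        _ ≤ B := hB a
    · -- m ≤ t
      have hsplit : S ^ t = S ^ (t - m) * S ^ m := by
        rw [← pow_add, Nat.sub_add_cancel htm]
      have hzero : ∑ i, (W * S ^ (t - m)) a i = 0 := by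
        simp_rw [Matrix.mul_apply]
        rw [Finset.sum_comm]
        simp_rw [← Finset.mul_sum, (hSpow (t - m)).2, mul_one]
        exact hW0 a
      have hentry : ∀ b, (W * S ^ t) a b = ∑ i, (W * S ^ (t - m)) a i * (S ^ m) i b := by
        intro b
        rw [hsplit, ← mul_assoc, Matrix.mul_apply]
      have hlt : t - m < t := Nat.sub_lt (lt_of_lt_of_le hm htm) hm
      have ihb := ih (t - m) hlt a
      calc ∑ b, |(W * S ^ t) a b|
          = ∑ b, |∑ i, (W * S ^ (t - m)) a i * (S ^ m) i b| := by simp_rw [hentry]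
        _ ≤ θ * ∑ i, |(W * S ^ (t - m)) a i| :=
            l1_contraction (hSpow m) hε hεS hzero
        _ ≤ θ * (B * θ ^ ((t - m) / m)) := by
            exact mul_le_mul_of_nonneg_left ihb hθ
        _ = B * θ ^ ((t - m) / m + 1) := by ring
        _ = B * θ ^ (t / m) := by
            congr 1
            rw [Nat.div_eq_sub_div hm htm]


lemma listProd_kron : ∀ (t : ℕ) (A : Fin t → Matrix n n ℝ),
    (List.ofFn fun s => A s ⊗ₖ A s).prod = (List.ofFn A).prod ⊗ₖ (List.ofFn A).prod
  | 0, _ => by simp [Matrix.one_kronecker_one]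
  | (t + 1), A => by
      rw [List.ofFn_succ, List.prod_cons, List.ofFn_succ (f := A), List.prod_cons,
        listProd_kron t (fun s => A (s.succ)), ← Matrix.mul_kronecker_mul]

end General

section JLem

variable {N : ℕ} (hN : 1 ≤ N)
include hN

lemma J_mul_J : Jmat N * Jmat N = Jmat N := by
  ext i j
  simp only [Matrix.mul_apply, Jmat, Matrix.of_apply]
  rw [Finset.sum_const, Finset.card_univ, Fintype.card_fin, nsmul_eq_mul]
  rw [mul_inv_cancel_left₀ (by positivity : (N:ℝ) ≠ 0)]

lemma rowsum_J (i : Fin N) : ∑ j, Jmat N i j = 1 := by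
  simp only [Jmat, Matrix.of_apply]
  rw [Finset.sum_const, Finset.card_univ, Fintype.card_fin, nsmul_eq_mul]
  field_simp

lemma rowsum_P (i : Fin N) : ∑ j, (1 - Jmat N) i j = 0 := by
  simp only [Matrix.sub_apply]
  rw [Finset.sum_sub_distrib, rowsum_J hN]
  simp [Matrix.one_apply]

lemma stoch_mul_J {K : Matrix (Fin N) (Fin N) ℝ} (hK : ∀ i, ∑ j, K i j = 1) :
    K * Jmat N = Jmat N := by
  ext i j
  simp only [Matrix.mul_apply, Jmat, Matrix.of_apply]
  rw [← Finset.sum_mul, hK i, one_mul]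

lemma P_mul_J : (1 - Jmat N) * Jmat N = 0 := by
  rw [sub_mul, one_mul, J_mul_J hN, sub_self]

lemma PKP {K : Matrix (Fin N) (Fin N) ℝ} (hK : ∀ i, ∑ j, K i j = 1) :
    (1 - Jmat N) * K * (1 - Jmat N) = (1 - Jmat N) * K := by
  rw [mul_sub, mul_one, mul_assoc, stoch_mul_J hN hK, P_mul_J hN, sub_zero]

end JLem


section Spectral

variable {n : Type*} [Fintype n] [DecidableEq n] [Nonempty n]

lemma map_pow_ofReal (Rm : Matrix n n ℝ) (t : ℕ) :
    (Rm ^ t).map Complex.ofReal = (Rm.map Complex.ofReal) ^ t := by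
  have : ∀ M : Matrix n n ℝ, M.map Complex.ofReal = Complex.ofRealHom.mapMatrix M := by
    intro M; rfl
  rw [this, this, map_pow]

lemma eig_bound (Rm : Matrix n n ℝ) (m₂ : ℕ) (hm₂ : 1 ≤ m₂) (θ B : ℝ)
    (hθ0 : 0 < θ) (hθ1 : θ < 1) (hB : 0 < B)
    (hrow : ∀ q, 1 ≤ q → ∀ a, ∑ b, |(Rm ^ (m₂ * q)) a b| ≤ B * θ ^ q) :
    ∀ μ ∈ spectrum ℂ (Rm.map Complex.ofReal), ‖μ‖ ^ m₂ ≤ θ := by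
  intro μ hμ
  set A : Matrix n n ℂ := Rm.map Complex.ofReal with hA
  -- get eigenvector
  have hnu : ¬IsUnit (algebraMap ℂ (Matrix n n ℂ) μ - A) := spectrum.mem_iff.mp hμ
  have hdet : (algebraMap ℂ (Matrix n n ℂ) μ - A).det = 0 := by
    by_contra h
    exact hnu ((Matrix.isUnit_iff_isUnit_det _).mpr (Ne.isUnit h))
  obtain ⟨v, hv0, hv⟩ := (Matrix.exists_mulVec_eq_zero_iff).mpr hdet
  have hev : A *ᵥ v = μ • v := by
    have : (algebraMap ℂ (Matrix n n ℂ) μ - A) *ᵥ v = 0 := hv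
    rw [Matrix.sub_mulVec] at this
    have h2 : algebraMap ℂ (Matrix n n ℂ) μ *ᵥ v = μ • v := by
      rw [Algebra.algebraMap_eq_smul_one, Matrix.smul_mulVec, Matrix.one_mulVec]
    rw [h2] at this
    linear_combination (norm := module) -this
  have hevt : ∀ t : ℕ, A ^ t *ᵥ v = μ ^ t • v := by
    intro t
    induction t with
    | zero => simp [Matrix.one_mulVec]
    | succ t iht =>
        rw [pow_succ', ← Matrix.mulVec_mulVec, iht, Matrix.mulVec_smul, hev,
          smul_smul, ← pow_succ]
  -- maximal coordinate
  obtain ⟨i₀, -, hmax⟩ := Finset.exists_max_image Finset.univ (fun i => ‖v i‖)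
    Finset.univ_nonempty
  have hvi₀ : 0 < ‖v i₀‖ := by
    obtain ⟨j, hj⟩ := Function.ne_iff.mp hv0
    exact lt_of_lt_of_le (norm_pos_iff.mpr hj) (hmax j (Finset.mem_univ j))
  -- the key estimate at times m₂ * q
  have key : ∀ q : ℕ, 1 ≤ q → (‖μ‖ ^ m₂) ^ q ≤ B * θ ^ q := by
    intro q hq
    set t := m₂ * q with ht
    have h1 : ‖(A ^ t *ᵥ v) i₀‖ = ‖μ‖ ^ t * ‖v i₀‖ := by
      rw [hevt t]
      simp [norm_smul, norm_pow]
    have h2 : ‖(A ^ t *ᵥ v) i₀‖ ≤ (∑ b, |(Rm ^ t) i₀ b|) * ‖v i₀‖ := by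
      rw [Matrix.mulVec, dotProduct]
      refine (norm_sum_le _ _).trans ?_
      rw [Finset.sum_mul]
      refine Finset.sum_le_sum fun b _ => ?_
      rw [norm_mul]
      have hent : ‖(A ^ t) i₀ b‖ = |(Rm ^ t) i₀ b| := by
        rw [hA, ← map_pow_ofReal]
        exact RCLike.norm_ofReal _
      rw [hent]
      exact mul_le_mul_of_nonneg_left (hmax b (Finset.mem_univ b)) (abs_nonneg _)
    have h3 : ‖μ‖ ^ t * ‖v i₀‖ ≤ (B * θ ^ q) * ‖v i₀‖ := by
      rw [← h1]
      exact h2.trans (mul_le_mul_of_nonneg_right (hrow q hq i₀) (le_of_lt hvi₀))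
    have h4 : ‖μ‖ ^ t ≤ B * θ ^ q := le_of_mul_le_mul_right h3 hvi₀
    rwa [ht, pow_mul] at h4
  -- conclude ‖μ‖ ^ m₂ ≤ θ
  by_contra hcon
  push_neg at hcon
  set x := ‖μ‖ ^ m₂ with hx
  have hx1 : 1 < x / θ := (one_lt_div hθ0).mpr hcon
  obtain ⟨q, hq⟩ := pow_unbounded_of_one_lt B hx1
  have hq' : (x / θ) ^ (max q 1) ≤ B := by
    have := key (max q 1) (le_max_right q 1)
    rw [div_pow]
    rw [div_le_iff₀ (by positivity)]
    exact this
  have : (x / θ) ^ q ≤ (x / θ) ^ (max q 1) :=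
    pow_le_pow_right₀ (le_of_lt hx1) (le_max_left q 1)
  linarith

lemma specRad_le (Rm : Matrix n n ℝ) (m₂ : ℕ) (θ : ℝ) (hm₂ : 1 ≤ m₂)
    (hθ0 : 0 < θ) (hθ1 : θ < 1)
    (hall : ∀ μ ∈ spectrum ℂ (Rm.map Complex.ofReal), ‖μ‖ ^ m₂ ≤ θ) :
    spectralRadius ℂ (Rm.map Complex.ofReal) ≤ ENNReal.ofReal (θ ^ (1/(m₂:ℝ))) ∧
      θ ^ (1/(m₂:ℝ)) < 1 := by
  have hm₂' : (m₂ : ℝ) ≠ 0 := by positivity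
  have hcpow : (θ ^ (1/(m₂:ℝ))) ^ m₂ = θ := by
    rw [← Real.rpow_natCast (θ ^ (1/(m₂:ℝ))) m₂, ← Real.rpow_mul (le_of_lt hθ0),
      one_div_mul_cancel hm₂', Real.rpow_one]
  constructor
  · rw [spectralRadius]
    refine iSup₂_le fun μ hμ => ?_
    rw [← ENNReal.ofReal_coe_nnreal, coe_nnnorm]
    refine ENNReal.ofReal_le_ofReal ?_
    have h := hall μ hμ
    refine le_of_pow_le_pow_left₀ (n := m₂) (by omega) (Real.rpow_nonneg (le_of_lt hθ0) _) ?_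
    rwa [hcpow]
  · exact Real.rpow_lt_one (le_of_lt hθ0) hθ1 (by positivity)

section GelfandConseq

attribute [local instance] Matrix.linftyOpNormedRing Matrix.linftyOpNormedAlgebra

lemma gelfand_bound (Rm : Matrix n n ℝ) {η : ℝ} (hη0 : 0 < η)
    (hfin : spectralRadius ℂ (Rm.map Complex.ofReal) ≠ ⊤)
    (hspec : (spectralRadius ℂ (Rm.map Complex.ofReal)).toReal < η) :
    ∃ n₀ : ℕ, ∀ t, n₀ ≤ t → ∀ a b, |(Rm ^ t) a b| ≤ η ^ t := by
  haveI : CompleteSpace (Matrix n n ℂ) := FiniteDimensional.complete ℂ _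
  set A : Matrix n n ℂ := Rm.map Complex.ofReal with hA
  have htendsto := spectrum.pow_nnnorm_pow_one_div_tendsto_nhds_spectralRadius A
  have hlt : spectralRadius ℂ A < ENNReal.ofReal η :=
    (ENNReal.lt_ofReal_iff_toReal_lt hfin).mpr hspec
  have hev : ∀ᶠ t : ℕ in Filter.atTop,
      (‖A ^ t‖₊ : ℝ≥0∞) ^ (1/(t:ℝ)) < ENNReal.ofReal η :=
    htendsto.eventually_lt_const hlt
  rw [Filter.eventually_atTop] at hev
  obtain ⟨n₀, hn₀⟩ := hev
  refine ⟨max n₀ 1, fun t ht a b => ?_⟩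
  have ht1 : 1 ≤ t := le_trans (le_max_right n₀ 1) ht
  have ht0 : (t : ℝ) ≠ 0 := by positivity
  have h1 : (‖A ^ t‖₊ : ℝ≥0∞) ^ (1/(t:ℝ)) ≤ ENNReal.ofReal η :=
    le_of_lt (hn₀ t (le_trans (le_max_left n₀ 1) ht))
  have h2 : (‖A ^ t‖₊ : ℝ≥0∞) ≤ ENNReal.ofReal η ^ t := by
    have := ENNReal.rpow_le_rpow h1 (le_of_lt (by positivity : (0:ℝ) < (t:ℝ)))
    rwa [← ENNReal.rpow_mul, one_div_mul_cancel ht0, ENNReal.rpow_one,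
      ENNReal.rpow_natCast] at this
  have h3 : (‖A ^ t‖₊ : ℝ≥0∞) ≤ ENNReal.ofReal (η ^ t) := by
    rwa [ENNReal.ofReal_pow (le_of_lt hη0)]
  have h4 : ‖A ^ t‖ ≤ η ^ t := by
    have := (ENNReal.le_ofReal_iff_toReal_le ENNReal.coe_ne_top (by positivity)).mp h3
    simpa using this
  -- entry bound
  have h5 : |(Rm ^ t) a b| ≤ ‖A ^ t‖ := by
    have hent : |(Rm ^ t) a b| = ‖(A ^ t) a b‖ := by
      rw [hA, ← map_pow_ofReal]
      exact (RCLike.norm_ofReal _).symm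
    rw [hent]
    have hrow : ‖(A ^ t) a b‖₊ ≤ ∑ j, ‖(A ^ t) a j‖₊ :=
      Finset.single_le_sum (f := fun j => ‖(A ^ t) a j‖₊) (fun j _ => zero_le)
        (Finset.mem_univ b)
    have hsup : (∑ j, ‖(A ^ t) a j‖₊) ≤ Finset.univ.sup fun i => ∑ j, ‖(A ^ t) i j‖₊ :=
      Finset.le_sup (f := fun i => ∑ j, ‖(A ^ t) i j‖₊) (Finset.mem_univ a)
    have : ‖(A ^ t) a b‖₊ ≤ ‖A ^ t‖₊ := by
      rw [Matrix.linfty_opNNNorm_def]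
      exact hrow.trans hsup
    exact this
  exact h5.trans h4

end GelfandConseq

end Spectral

end Stmt11Aux

open Stmt11Aux

theorem stmt11 {N M : ℕ} (hN : 1 ≤ N) (hM : 1 ≤ M)
    (K : Fin M → Matrix (Fin N) (Fin N) ℝ)
    (hK : ∀ k, RowStochastic (K k))
    (hdiag : ∀ k i, 0 < K k i i)
    (p : Fin M → ℝ) (hp : ∀ k, 0 < p k) (hpsum : ∑ k, p k = 1)
    (hprim : _root_.IsPrimitive (∑ k, p k • K k))
    (R : Matrix (Fin N × Fin N) (Fin N × Fin N) ℝ)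
    (hR : R = ((1 - Jmat N) ⊗ₖ (1 - Jmat N)) * ∑ k, p k • (K k ⊗ₖ K k))
    (EΨ₂ : ℕ → ℝ)
    (hEΨ₂ : ∀ t, EΨ₂ t = ∑ f : Fin t → Fin M, (∏ s, p (f s)) *
        ∑ i, ∑ j, (((1 - Jmat N) * (List.ofFn fun s => K (f s)).prod) i j) ^ 2) :
    specRad R < 1 ∧
      ∀ η : ℝ, specRad R < η → η < 1 →
        ∃ C : ℝ, 0 < C ∧ ∀ t : ℕ, 1 ≤ t → EΨ₂ t ≤ C * η ^ t := by
  classical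
  obtain ⟨m, hm1, hQm⟩ := hprim
  haveI : Nonempty (Fin N) := ⟨⟨0, by omega⟩⟩
  set P : Matrix (Fin N) (Fin N) ℝ := 1 - Jmat N with hP
  set S : Matrix (Fin N × Fin N) (Fin N × Fin N) ℝ := ∑ k, p k • (K k ⊗ₖ K k) with hS
  set Pi2 : Matrix (Fin N × Fin N) (Fin N × Fin N) ℝ := P ⊗ₖ P with hPi2
  have hNR : (0:ℝ) < N := by exact_mod_cast hN
  -- stochasticity of word products
  have hStochAf : ∀ (t : ℕ) (f : Fin t → Fin M), Stoch ((List.ofFn fun s => K (f s)).prod) := by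
    intro t f
    refine Stoch.listProd _ fun A hA => ?_
    rw [List.mem_ofFn] at hA
    obtain ⟨s, rfl⟩ := hA
    exact ⟨(hK (f s)).1, (hK (f s)).2⟩
  have hPosAf : ∀ (t : ℕ) (f : Fin t → Fin M), PosDiag ((List.ofFn fun s => K (f s)).prod) := by
    intro t f
    refine PosDiag.listProd _ fun A hA => ?_
    rw [List.mem_ofFn] at hA
    obtain ⟨s, rfl⟩ := hA
    exact ⟨(hK (f s)).1, hdiag (f s)⟩
  -- expansions
  have hQexp : ∀ t : ℕ, (∑ k, p k • K k) ^ t =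
      ∑ f : Fin t → Fin M, (∏ s, p (f s)) • (List.ofFn fun s => K (f s)).prod := by
    intro t
    rw [pow_sum_expand (fun k => p k • K k) t]
    exact Finset.sum_congr rfl fun f _ => listProd_smul t (fun s => p (f s)) (fun s => K (f s))
  have hSexp : ∀ t : ℕ, S ^ t = ∑ f : Fin t → Fin M, (∏ s, p (f s)) •
      ((List.ofFn fun s => K (f s)).prod ⊗ₖ (List.ofFn fun s => K (f s)).prod) := by
    intro t
    rw [hS, pow_sum_expand (fun k => p k • (K k ⊗ₖ K k)) t]
    refine Finset.sum_congr rfl fun f _ => ?_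
    rw [listProd_smul t (fun s => p (f s)) (fun s => K (f s) ⊗ₖ K (f s)),
      listProd_kron]
  -- S is stochastic
  have hSstoch : Stoch S := by
    constructor
    · intro i j
      rw [hS, Matrix.sum_apply]
      refine Finset.sum_nonneg fun k _ => ?_
      rw [Matrix.smul_apply, Matrix.kroneckerMap_apply, smul_eq_mul]
      exact mul_nonneg (le_of_lt (hp k)) (mul_nonneg ((hK k).1 _ _) ((hK k).1 _ _))
    · intro i
      rw [hS]
      simp only [Matrix.sum_apply, Matrix.smul_apply, Matrix.kroneckerMap_apply, smul_eq_mul]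
      rw [Finset.sum_comm]
      have : ∀ k : Fin M, ∑ j : Fin N × Fin N,
          p k * (K k i.1 j.1 * K k i.2 j.2) = p k := by
        intro k
        rw [← Finset.mul_sum, Fintype.sum_prod_type]
        simp_rw [← Finset.sum_mul_sum]
        rw [(hK k).2, (hK k).2, one_mul, mul_one]
      simp_rw [this]
      exact hpsum
  -- the projection identity
  have hPKP : ∀ t (f : Fin t → Fin M),
      P * (List.ofFn fun s => K (f s)).prod * P = P * (List.ofFn fun s => K (f s)).prod :=
    fun t f => PKP hN (hStochAf t f).2
  have hPiSPi : Pi2 * S * Pi2 = Pi2 * S := by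
    rw [hS, Finset.mul_sum, Finset.sum_mul]
    refine Finset.sum_congr rfl fun k _ => ?_
    rw [mul_smul_comm, smul_mul_assoc]
    congr 1
    rw [hPi2, ← Matrix.mul_kronecker_mul, ← Matrix.mul_kronecker_mul,
      PKP hN (hK k).2]
  have hRt : ∀ t : ℕ, 1 ≤ t → R ^ t = Pi2 * S ^ t := by
    have haux : ∀ u : ℕ, R ^ (u + 1) = Pi2 * S ^ (u + 1) := by
      intro u
      induction u with
      | zero => simpa using hR
      | succ u ih =>
          calc R ^ (u + 2) = R * R ^ (u + 1) := by rw [← pow_succ']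
            _ = (Pi2 * S) * (Pi2 * S ^ (u + 1)) := by rw [ih, hR]
            _ = (Pi2 * S * Pi2) * S ^ (u + 1) := (mul_assoc _ _ _).symm
            _ = (Pi2 * S) * S ^ (u + 1) := by rw [hPiSPi]
            _ = Pi2 * S ^ (u + 2) := by rw [mul_assoc, ← pow_succ']
    intro t ht
    obtain ⟨u, rfl⟩ : ∃ u, t = u + 1 := ⟨t - 1, by omega⟩
    exact haux u
  -- the formula for EΨ₂
  have hEΨeq : ∀ t : ℕ, EΨ₂ t = ∑ i : Fin N, ∑ j : Fin N, (Pi2 * S ^ t) (i,i) (j,j) := by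
    intro t
    rw [hEΨ₂ t, hSexp t, Finset.mul_sum]
    simp_rw [mul_smul_comm, hPi2, ← Matrix.mul_kronecker_mul]
    simp only [Matrix.sum_apply, Matrix.smul_apply, Matrix.kroneckerMap_apply, smul_eq_mul]
    simp_rw [Finset.mul_sum, pow_two]
    rw [Finset.sum_comm]
    exact Finset.sum_congr rfl fun i _ => Finset.sum_comm
  -- entry formulas
  have hSentry : ∀ (u : ℕ) (x y : Fin N × Fin N), (S ^ u) x y =
      ∑ f : Fin u → Fin M, (∏ s, p (f s)) *
        ((List.ofFn fun s => K (f s)).prod x.1 y.1 *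
          (List.ofFn fun s => K (f s)).prod x.2 y.2) := by
    intro u x y
    rw [hSexp u]
    simp [Matrix.sum_apply, Matrix.smul_apply, Matrix.kroneckerMap_apply]
  have hQentry : ∀ (i j : Fin N), ((∑ k, p k • K k) ^ m) i j =
      ∑ f : Fin m → Fin M, (∏ s, p (f s)) * (List.ofFn fun s => K (f s)).prod i j := by
    intro i j
    rw [hQexp m]
    simp [Matrix.sum_apply, Matrix.smul_apply]
  have hprodp : ∀ (u : ℕ) (f : Fin u → Fin M), 0 < ∏ s, p (f s) :=
    fun u f => Finset.prod_pos fun s _ => hp (f s)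
  -- find a positive word entry
  have hfind : ∀ a b : Fin N, ∃ f : Fin m → Fin M,
      0 < (List.ofFn fun s => K (f s)).prod a b := by
    intro a b
    by_contra h
    push_neg at h
    have h0 := hQm a b
    rw [hQentry a b] at h0
    have : (∑ f : Fin m → Fin M, (∏ s, p (f s)) *
        (List.ofFn fun s => K (f s)).prod a b) ≤ 0 := by
      refine Finset.sum_nonpos fun f _ => ?_
      exact mul_nonpos_iff.mpr (Or.inl ⟨(le_of_lt (hprodp m f)), h f⟩)
    linarith
  have hSmnn : ∀ (u : ℕ) (x y : Fin N × Fin N), 0 ≤ (S ^ u) x y :=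
    fun u x y => (hSstoch.pow u).1 x y
  -- positivity claims
  have hclaim1 : ∀ a a' b : Fin N, 0 < (S ^ m) (a, a') (b, a') := by
    intro a a' b
    obtain ⟨f, hf⟩ := hfind a b
    rw [hSentry m (a, a') (b, a')]
    refine Finset.sum_pos' (fun g _ => ?_) ⟨f, Finset.mem_univ f, ?_⟩
    · exact mul_nonneg (le_of_lt (hprodp m g))
        (mul_nonneg ((hStochAf m g).1 _ _) ((hStochAf m g).1 _ _))
    · exact mul_pos (hprodp m f) (mul_pos hf ((hPosAf m f).2 a'))
  have hclaim2 : ∀ a a' b' : Fin N, 0 < (S ^ m) (a, a') (a, b') := by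
    intro a a' b'
    obtain ⟨f, hf⟩ := hfind a' b'
    rw [hSentry m (a, a') (a, b')]
    refine Finset.sum_pos' (fun g _ => ?_) ⟨f, Finset.mem_univ f, ?_⟩
    · exact mul_nonneg (le_of_lt (hprodp m g))
        (mul_nonneg ((hStochAf m g).1 _ _) ((hStochAf m g).1 _ _))
    · exact mul_pos (hprodp m f) (mul_pos ((hPosAf m f).2 a) hf)
  have hpos2 : ∀ x y : Fin N × Fin N, 0 < (S ^ (m + m)) x y := by
    intro x y
    rw [pow_add, Matrix.mul_apply]
    have hterm : 0 < (S ^ m) x (y.1, x.2) * (S ^ m) (y.1, x.2) y := by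
      have h1 : 0 < (S ^ m) x (y.1, x.2) := by
        have := hclaim1 x.1 x.2 y.1; simpa using this
      have h2 : 0 < (S ^ m) (y.1, x.2) y := by
        have := hclaim2 y.1 x.2 y.2; simpa using this
      exact mul_pos h1 h2
    refine lt_of_lt_of_le hterm ?_
    exact Finset.single_le_sum (f := fun c => (S ^ m) x c * (S ^ m) c y)
      (fun c _ => mul_nonneg (hSmnn m x c) (hSmnn m c y)) (Finset.mem_univ _)
  -- the minimum entry ε and contraction factor θ
  set ε : ℝ := Finset.univ.inf'
    (Finset.univ_nonempty)
    (fun q : (Fin N × Fin N) × (Fin N × Fin N) => (S ^ (m + m)) q.1 q.2) with hεdef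
  have hε0 : 0 < ε := by
    rw [hεdef, Finset.lt_inf'_iff]
    exact fun q _ => hpos2 q.1 q.2
  have hεle : ∀ x y : Fin N × Fin N, ε ≤ (S ^ (m + m)) x y := by
    intro x y
    exact Finset.inf'_le _ (Finset.mem_univ ((x, y)))
  have hcard : (Fintype.card (Fin N × Fin N) : ℝ) = (N : ℝ) * N := by
    rw [Fintype.card_prod, Fintype.card_fin]
    push_cast
    ring
  set θ : ℝ := 1 - (Fintype.card (Fin N × Fin N) : ℝ) * ε with hθdef
  have hθ0 : 0 ≤ θ := by
    obtain ⟨x⟩ : Nonempty (Fin N × Fin N) := inferInstance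
    have h1 : (Fintype.card (Fin N × Fin N) : ℝ) * ε ≤ ∑ y, (S ^ (m + m)) x y := by
      calc (Fintype.card (Fin N × Fin N) : ℝ) * ε = ∑ _y : Fin N × Fin N, ε := by
            rw [Finset.sum_const, Finset.card_univ, nsmul_eq_mul]
        _ ≤ ∑ y, (S ^ (m + m)) x y := Finset.sum_le_sum fun y _ => hεle x y
    rw [(hSstoch.pow (m + m)).2 x] at h1
    rw [hθdef]
    linarith
  have hθ1 : θ < 1 := by
    rw [hθdef]
    have : (0:ℝ) < (Fintype.card (Fin N × Fin N) : ℝ) * ε := by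
      apply mul_pos _ hε0
      rw [hcard]; positivity
    linarith
  -- row sums of Pi2
  have hPi0 : ∀ a : Fin N × Fin N, ∑ b, Pi2 a b = 0 := by
    intro a
    rw [Fintype.sum_prod_type]
    simp only [hPi2, Matrix.kroneckerMap_apply]
    simp_rw [← Finset.sum_mul_sum]
    rw [hP, rowsum_P hN, zero_mul]
  have habsP : ∀ i : Fin N, ∑ j, |P i j| ≤ 2 := by
    intro i
    have hb : ∀ j, |P i j| ≤ (1 : Matrix (Fin N) (Fin N) ℝ) i j + (N : ℝ)⁻¹ := by
      intro j
      rw [hP]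
      simp only [Matrix.sub_apply]
      refine (abs_sub _ _).trans ?_
      have h1 : |(1 : Matrix (Fin N) (Fin N) ℝ) i j| = (1 : Matrix (Fin N) (Fin N) ℝ) i j := by
        apply abs_of_nonneg
        by_cases h : i = j <;> simp [Matrix.one_apply, h]
      have h2 : |Jmat N i j| = (N : ℝ)⁻¹ := by
        rw [Jmat]
        simp only [Matrix.of_apply]
        rw [abs_of_nonneg (by positivity)]
      rw [h1, h2]
    calc ∑ j, |P i j| ≤ ∑ j, ((1 : Matrix (Fin N) (Fin N) ℝ) i j + (N : ℝ)⁻¹) :=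
          Finset.sum_le_sum fun j _ => hb j
      _ = 1 + (N : ℝ) * (N : ℝ)⁻¹ := by
          rw [Finset.sum_add_distrib, Finset.sum_const, Finset.card_univ, Fintype.card_fin,
            nsmul_eq_mul]
          simp [Matrix.one_apply]
      _ ≤ 2 := by
          rw [mul_inv_cancel₀ (ne_of_gt hNR)]
          norm_num
  have hB4 : ∀ a : Fin N × Fin N, ∑ b, |Pi2 a b| ≤ 4 := by
    intro a
    rw [Fintype.sum_prod_type]
    simp only [hPi2, Matrix.kroneckerMap_apply]
    simp_rw [abs_mul, ← Finset.sum_mul_sum]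
    calc (∑ j, |P a.1 j|) * ∑ j, |P a.2 j| ≤ 2 * 2 := by
          refine mul_le_mul (habsP a.1) (habsP a.2) ?_ (by norm_num)
          exact Finset.sum_nonneg fun j _ => abs_nonneg _
      _ = 4 := by norm_num
  -- decay of rows of Pi2 * S^t
  have hdec := Stmt11Aux.decay (W := Pi2) hSstoch (show 1 ≤ m + m by omega)
    (le_of_lt hε0) (fun i j => hεle i j) hPi0 hB4 hθ0
  -- adjusted contraction factor, strictly between 0 and 1
  set θ' : ℝ := max θ 2⁻¹ with hθ'def
  have hθ'0 : 0 < θ' := lt_of_lt_of_le (by norm_num) (le_max_right _ _)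
  have hθ'1 : θ' < 1 := max_lt hθ1 (by norm_num)
  have hθθ' : θ ≤ θ' := le_max_left _ _
  -- row bound for powers of R
  have hrow : ∀ q : ℕ, 1 ≤ q → ∀ a : Fin N × Fin N,
      ∑ b, |(R ^ ((m + m) * q)) a b| ≤ 4 * θ' ^ q := by
    intro q hq a
    have ht1 : 1 ≤ (m + m) * q := by
      have := Nat.mul_le_mul (show 1 ≤ m + m by omega) hq
      simpa using this
    rw [hRt _ ht1]
    refine (hdec ((m + m) * q) a).trans ?_
    rw [Nat.mul_div_cancel_left q (show 0 < m + m by omega)]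
    have : θ ^ q ≤ θ' ^ q := pow_le_pow_left₀ hθ0 hθθ' q
    linarith
  -- eigenvalue bound and spectral radius bound
  have heig := Stmt11Aux.eig_bound R (m + m) (by omega) θ' 4 hθ'0 hθ'1 (by norm_num) hrow
  have hspec := Stmt11Aux.specRad_le R (m + m) θ' (by omega) hθ'0 hθ'1 heig
  set c : ℝ := θ' ^ (1 / ((m + m : ℕ) : ℝ)) with hcdef
  have hc0 : 0 ≤ c := Real.rpow_nonneg (le_of_lt hθ'0) _
  have hfin : spectralRadius ℂ (R.map Complex.ofReal) ≠ ⊤ :=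
    ne_top_of_le_ne_top ENNReal.ofReal_ne_top hspec.1
  have hsr : specRad R ≤ c := by
    have h1 := ENNReal.toReal_mono ENNReal.ofReal_ne_top hspec.1
    rw [ENNReal.toReal_ofReal hc0] at h1
    exact h1
  have part1 : specRad R < 1 := lt_of_le_of_lt hsr hspec.2
  refine ⟨part1, fun η hη hη1 => ?_⟩
  -- part 2
  have hη0 : 0 < η := lt_of_le_of_lt ENNReal.toReal_nonneg hη
  have hηspec : (spectralRadius ℂ (R.map Complex.ofReal)).toReal < η := hη
  obtain ⟨n₀, hn₀⟩ := Stmt11Aux.gelfand_bound R hη0 hfin hηspec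
  -- nonnegativity of EΨ₂
  have hEnn : ∀ t : ℕ, 0 ≤ EΨ₂ t := by
    intro t
    rw [hEΨ₂ t]
    refine Finset.sum_nonneg fun f _ => ?_
    refine mul_nonneg (le_of_lt (hprodp t f)) ?_
    exact Finset.sum_nonneg fun i _ => Finset.sum_nonneg fun j _ => sq_nonneg _
  -- the bound for large t
  have hbig : ∀ t : ℕ, max n₀ 1 ≤ t → EΨ₂ t ≤ (N : ℝ) ^ 2 * η ^ t := by
    intro t ht
    have ht1 : 1 ≤ t := le_trans (le_max_right _ _) ht
    have htn₀ : n₀ ≤ t := le_trans (le_max_left _ _) ht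
    rw [hEΨeq t, ← hRt t ht1]
    calc ∑ i : Fin N, ∑ j : Fin N, (R ^ t) (i,i) (j,j)
        ≤ ∑ i : Fin N, ∑ j : Fin N, η ^ t := by
          refine Finset.sum_le_sum fun i _ => Finset.sum_le_sum fun j _ => ?_
          exact (le_abs_self _).trans (hn₀ t htn₀ (i,i) (j,j))
      _ = (N : ℝ) ^ 2 * η ^ t := by
          rw [Finset.sum_const, Finset.sum_const, Finset.card_univ, Fintype.card_fin,
            nsmul_eq_mul, nsmul_eq_mul]
          ring
  -- choose the constant
  set C : ℝ := (N : ℝ) ^ 2 + (∑ u ∈ Finset.range (max n₀ 1), EΨ₂ u / η ^ u) + 1 with hCdef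
  have hsum0 : 0 ≤ ∑ u ∈ Finset.range (max n₀ 1), EΨ₂ u / η ^ u :=
    Finset.sum_nonneg fun u _ => div_nonneg (hEnn u) (pow_nonneg (le_of_lt hη0) u)
  have hN2 : (0:ℝ) ≤ (N : ℝ) ^ 2 := by positivity
  have hC0 : 0 < C := by rw [hCdef]; linarith
  refine ⟨C, hC0, fun t ht1 => ?_⟩
  rcases lt_or_ge t (max n₀ 1) with h | h
  · have hmem : t ∈ Finset.range (max n₀ 1) := Finset.mem_range.mpr h
    have h1 : EΨ₂ t / η ^ t ≤ ∑ u ∈ Finset.range (max n₀ 1), EΨ₂ u / η ^ u :=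
      Finset.single_le_sum (f := fun u => EΨ₂ u / η ^ u)
        (fun u _ => div_nonneg (hEnn u) (pow_nonneg (le_of_lt hη0) u)) hmem
    have hηt : (0:ℝ) < η ^ t := pow_pos hη0 t
    calc EΨ₂ t = (EΨ₂ t / η ^ t) * η ^ t := by field_simp
      _ ≤ C * η ^ t := by
          refine mul_le_mul_of_nonneg_right ?_ (le_of_lt hηt)
          rw [hCdef]
          linarith
  · refine (hbig t h).trans ?_
    refine mul_le_mul_of_nonneg_right ?_ (pow_nonneg (le_of_lt hη0) t)
    rw [hCdef]
    linarith
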